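/- Let X be exponential with mean γ_AB and Y* the maximum of K i.i.d. exponentials with mean γ_AR, independent of X, with ρ > 0 and R ≥ 0. Then P((1 + ρX)/(1 + ρY*) < 2^R) = 1 − K Σ_{n=0}^{K−1} C(K−1, n)(−1)^n · (γ_AB/(2^R γ_AR + γ_AB(n+1))) · e^{−(2^R − 1)/(ρ γ_AB)}. -/

import Mathlib

open MeasureTheory ProbabilityTheory Real Set Filter Topology
lemma integral_exp_neg_mul_Ioi {a : ℝ} (ha : 0 < a) (c : ℝ) :
    ∫ x in Ioi c, rexp (-(a * x)) = rexp (-(a * c)) / a := by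
  have hderiv : ∀ x ∈ Ici c, HasDerivAt (fun y => -rexp (-(a * y)) / a) (rexp (-(a * x))) x := by
    intro x _
    have h := (ProbabilityTheory.hasDerivAt_neg_exp_mul_exp (r := a) (x := x)).div_const a
    have h2 : a * rexp (-(a * x)) / a = rexp (-(a * x)) := by
      field_simp
    rw [h2] at h
    exact h
  have htend : Tendsto (fun x => -rexp (-(a * x)) / a) atTop (𝓝 0) := by
    have h1 : Tendsto (fun x : ℝ => a * x) atTop atTop :=
      Tendsto.const_mul_atTop ha tendsto_id
    have h2 : Tendsto (fun x : ℝ => rexp (-(a * x))) atTop (𝓝 0) :=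
      Real.tendsto_exp_neg_atTop_nhds_zero.comp h1
    simpa using (h2.neg).div_const a
  have := integral_Ioi_of_hasDerivAt_of_tendsto'
    (f := fun y => -rexp (-(a * y)) / a) (f' := fun y => rexp (-(a * y))) (m := 0)
    hderiv (by simpa [neg_mul] using exp_neg_integrableOn_Ioi c (b := a) ha) htend
  rw [this]; ring



lemma alt_choose_sum (A B : ℝ) (hA : 0 < A) (hB : 0 < B) (m : ℕ) :
    ∑ j ∈ Finset.range (m + 2), ((m + 1).choose j : ℝ) * (-1) ^ j * (A / (A + j * B))
      = (m + 1) * ∑ n ∈ Finset.range (m + 1),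
          (m.choose n : ℝ) * (-1) ^ n * (B / (A + (n + 1) * B)) := by
  have halt : ∑ j ∈ Finset.range (m + 2), ((m + 1).choose j : ℝ) * (-1) ^ j = 0 := by
    have h := Int.alternating_sum_range_choose_of_ne (Nat.succ_ne_zero m)
    have h2 : ((∑ i ∈ Finset.range (m + 1 + 1), (-1 : ℤ) ^ i * ((m + 1).choose i) : ℤ) : ℝ) = 0 := by
      rw [h]; norm_num
    push_cast at h2
    rw [← h2]
    exact Finset.sum_congr rfl fun i _ => by ring
  have hterm : ∀ i ∈ Finset.range (m + 1),
      ((m + 1).choose (i + 1) : ℝ) * (-1) ^ (i + 1) * (A / (A + (↑(i + 1) : ℝ) * B))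
        = ((m + 1).choose (i + 1) : ℝ) * (-1) ^ (i + 1)
          + ((m : ℝ) + 1) * ((m.choose i : ℝ) * (-1) ^ i * (B / (A + ((i : ℝ) + 1) * B))) := by
    intro i _
    have hdne : A + ((i : ℝ) + 1) * B ≠ 0 := by positivity
    have hch : ((m + 1).choose (i + 1) : ℝ) * ((i : ℝ) + 1) = ((m : ℝ) + 1) * (m.choose i) := by
      have := Nat.add_one_mul_choose_eq m i
      have h3 := congrArg (Nat.cast : ℕ → ℝ) this
      push_cast [Nat.succ_eq_add_one] at h3
      linarith
    push_cast
    field_simp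
    ring_nf
    ring_nf at hch
    linear_combination ((-1 : ℝ) ^ i * B) * hch
  rw [Finset.sum_range_succ', Finset.sum_congr rfl hterm, Finset.sum_add_distrib,
    ← Finset.mul_sum]
  rw [Finset.sum_range_succ'] at halt
  push_cast
  simp only [Nat.cast_zero, zero_mul, add_zero, pow_zero, mul_one, Nat.choose_zero_right,
    Nat.cast_one, one_mul] at halt ⊢
  rw [div_self hA.ne']
  linarith

open MeasureTheory ProbabilityTheory Real Set

lemma expMeasure_Iic {r : ℝ} (hr : 0 < r) (x : ℝ) :
    expMeasure r (Iic x) = ENNReal.ofReal (if 0 ≤ x then 1 - rexp (-(r * x)) else 0) := by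
  rw [expMeasure, gammaMeasure, withDensity_apply _ measurableSet_Iic]
  exact lintegral_exponentialPDF_eq_antiDeriv hr x

lemma expMeasure_Iio_zero {r : ℝ} : expMeasure r (Iio 0) = 0 := by
  rw [expMeasure, gammaMeasure, withDensity_apply _ measurableSet_Iio]
  exact lintegral_gammaPDF_of_nonpos le_rfl

-- integrability of the exponential pdf (real-valued)
lemma integrable_exponentialPDFReal {r : ℝ} (hr : 0 < r) :
    Integrable (exponentialPDFReal r) := by
  have heq : exponentialPDFReal r = Set.indicator (Ici 0) fun x => r * rexp (-(r * x)) := by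
    funext x
    rw [exponentialPDFReal, gammaPDFReal]
    by_cases hx : 0 ≤ x
    · simp [hx, Set.indicator_of_mem, Real.Gamma_one, Real.rpow_one, Real.rpow_zero]
    · simp [hx, Set.indicator_of_notMem]
  rw [heq]
  refine IntegrableOn.integrable_indicator ?_ measurableSet_Ici
  rw [integrableOn_Ici_iff_integrableOn_Ioi]
  have := (exp_neg_integrableOn_Ioi 0 hr).const_mul r
  simpa [neg_mul, IntegrableOn] using this

open MeasureTheory ProbabilityTheory Real Set



lemma exponentialPDFReal_of_nonneg {r x : ℝ} (hx : 0 ≤ x) :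
    exponentialPDFReal r x = r * rexp (-(r * x)) := by
  rw [exponentialPDFReal, gammaPDFReal, if_pos hx]
  simp [Real.Gamma_one, Real.rpow_one, Real.rpow_zero]

lemma key_integral {lB b c : ℝ} (hlB : 0 < lB) (hb : 0 < b) (hc : 0 ≤ c) (K : ℕ) (hK : 0 < K) :
    ∫ x, (if c ≤ x then 1 - rexp (-(b * (x - c))) else 0) ^ K * exponentialPDFReal lB x
      = rexp (-(lB * c)) * ∑ j ∈ Finset.range (K + 1),
          (K.choose j : ℝ) * (-1) ^ j * (lB / (j * b + lB)) := by
  set f : ℝ → ℝ :=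
    fun x => (if c ≤ x then 1 - rexp (-(b * (x - c))) else 0) ^ K * exponentialPDFReal lB x with hf
  have hvanish : ∀ x ∉ Ioi c, f x = 0 := by
    intro x hx
    simp only [mem_Ioi, not_lt] at hx
    rcases lt_or_eq_of_le hx with h | h
    · simp [hf, if_neg (not_le.mpr h), zero_pow hK.ne']
    · simp [hf, h, zero_pow hK.ne']
  rw [← setIntegral_eq_integral_of_forall_compl_eq_zero hvanish]
  have hden : ∀ j : ℕ, (0 : ℝ) < j * b + lB := by
    intro j; positivity
  have hptwise : ∀ x ∈ Ioi c, f x = ∑ j ∈ Finset.range (K + 1),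
      (K.choose j : ℝ) * (-1) ^ j * rexp (b * c * j) * lB * rexp (-((j * b + lB) * x)) := by
    intro x hx
    have hx' : c ≤ x := le_of_lt hx
    have hx0 : 0 ≤ x := le_trans hc hx'
    rw [hf]
    simp only [if_pos hx', exponentialPDFReal_of_nonneg hx0]
    have hexp : (1 - rexp (-(b * (x - c)))) ^ K
        = ∑ j ∈ Finset.range (K + 1),
            (-rexp (-(b * (x - c)))) ^ j * 1 ^ (K - j) * (K.choose j : ℝ) := by
      rw [← add_pow]; ring_nf
    rw [hexp, Finset.sum_mul]
    refine Finset.sum_congr rfl fun j _ => ?_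
    rw [neg_pow, ← Real.exp_nat_mul, one_pow]
    have h1 : rexp ((j : ℝ) * -(b * (x - c))) * rexp (-(lB * x))
        = rexp (b * c * j) * rexp (-(((j : ℝ) * b + lB) * x)) := by
      rw [← Real.exp_add, ← Real.exp_add]; congr 1; ring
    linear_combination ((K.choose j : ℝ) * (-1) ^ j * lB) * h1
  rw [setIntegral_congr_fun measurableSet_Ioi hptwise]
  rw [integral_finset_sum]
  · have : ∀ j ∈ Finset.range (K + 1),
        ∫ x in Ioi c, (K.choose j : ℝ) * (-1) ^ j * rexp (b * c * j) * lB
            * rexp (-((j * b + lB) * x))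
          = rexp (-(lB * c)) * ((K.choose j : ℝ) * (-1) ^ j * (lB / (j * b + lB))) := by
      intro j _
      rw [integral_const_mul, integral_exp_neg_mul_Ioi (hden j)]
      have h2 : rexp (b * c * ↑j) * rexp (-((↑j * b + lB) * c)) = rexp (-(lB * c)) := by
        rw [← Real.exp_add]; congr 1; ring
      have hne := (hden j).ne'
      rw [← h2]
      ring
    rw [Finset.sum_congr rfl this, ← Finset.mul_sum]
  · intro j _
    have hIa : IntegrableOn (fun x => rexp (-((↑j * b + lB) * x))) (Ioi c) := by
      have h3 : (fun x : ℝ => rexp (-((↑j * b + lB) * x))) = fun x => rexp (-(↑j * b + lB) * x) := by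
        funext x; congr 1; ring
      rw [h3]; exact exp_neg_integrableOn_Ioi c (hden j)
    exact hIa.const_mul _

open MeasureTheory ProbabilityTheory Real Set

/-- Eq. (55): SOP of direct transmission under relay antenna selection. `X` is
exponential with mean `γAB`, `Y*` is the maximum of `K` i.i.d. exponentials with
mean `γAR`, independent of `X`. -/
theorem sop_DT_antenna_selection {Ω : Type*} [MeasurableSpace Ω] (μ : Measure Ω)
    [IsProbabilityMeasure μ] (γAB γAR ρ R : ℝ) (K : ℕ)
    (hAB : 0 < γAB) (hAR : 0 < γAR) (hρ : 0 < ρ) (hR : 0 ≤ R) (hK : 0 < K)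
    (X : Ω → ℝ) (Y : Fin K → Ω → ℝ)
    (hXm : Measurable X) (hYm : ∀ i, Measurable (Y i))
    (hX : Measure.map X μ = expMeasure (1 / γAB))
    (hY : ∀ i, Measure.map (Y i) μ = expMeasure (1 / γAR))
    (hYindep : iIndepFun Y μ)
    (hXY : IndepFun X (fun ω => ⨆ i, Y i ω) μ) :
    μ {ω | (1 + ρ * X ω) / (1 + ρ * ⨆ i, Y i ω) < (2 : ℝ) ^ R}
      = ENNReal.ofReal
          (1 - K * ∑ n ∈ Finset.range K,
              ((K - 1).choose n : ℝ) * (-1 : ℝ) ^ n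
                * (γAB / ((2 : ℝ) ^ R * γAR + γAB * (n + 1)))
                * Real.exp (-((2 : ℝ) ^ R - 1) / (ρ * γAB))) := by
  have ht1 : 1 ≤ (2 : ℝ) ^ R := Real.one_le_rpow one_le_two hR
  set t : ℝ := (2 : ℝ) ^ R with ht_def
  have ht0 : 0 < t := lt_of_lt_of_le one_pos ht1
  set lB : ℝ := 1 / γAB with hlB_def
  set lR : ℝ := 1 / γAR with hlR_def
  have hlB : 0 < lB := by positivity
  have hlR : 0 < lR := by positivity
  set c : ℝ := (t - 1) / ρ with hc_def
  have hc : 0 ≤ c := div_nonneg (by linarith) hρ.le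
  have hcrho : c * ρ = t - 1 := div_mul_cancel₀ _ hρ.ne'
  set b : ℝ := lR / t with hb_def
  have hb : 0 < b := by positivity
  set S : Ω → ℝ := fun ω => ⨆ i, Y i ω with hS_def
  have hSm : Measurable S := Measurable.iSup hYm
  haveI : Nonempty (Fin K) := ⟨⟨0, hK⟩⟩
  -- a.e. nonnegativity
  have haeX : ∀ᵐ ω ∂μ, 0 ≤ X ω := by
    rw [ae_iff]
    have h1 : {ω | ¬ 0 ≤ X ω} = X ⁻¹' (Iio 0) := by ext ω; simp [not_le]
    rw [h1, ← Measure.map_apply hXm measurableSet_Iio, hX, expMeasure_Iio_zero]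
  have haeS : ∀ᵐ ω ∂μ, 0 ≤ S ω := by
    have haeY : ∀ᵐ ω ∂μ, 0 ≤ Y ⟨0, hK⟩ ω := by
      rw [ae_iff]
      have h1 : {ω | ¬ 0 ≤ Y ⟨0, hK⟩ ω} = Y ⟨0, hK⟩ ⁻¹' (Iio 0) := by ext ω; simp [not_le]
      rw [h1, ← Measure.map_apply (hYm _) measurableSet_Iio, hY, expMeasure_Iio_zero]
    filter_upwards [haeY] with ω hω
    exact le_trans hω
      (le_ciSup (f := fun i => Y i ω) (Set.Finite.bddAbove (Set.finite_range _)) ⟨0, hK⟩)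
  -- rewrite the event
  have hset : μ {ω | (1 + ρ * X ω) / (1 + ρ * S ω) < t} = μ {ω | X ω < c + t * S ω} := by
    apply measure_congr
    rw [Filter.eventuallyEq_set]
    filter_upwards [haeX, haeS] with ω h1 h2
    have hden : (0 : ℝ) < 1 + ρ * S ω := by positivity
    show (1 + ρ * X ω) / (1 + ρ * S ω) < t ↔ X ω < c + t * S ω
    rw [div_lt_iff₀ hden]
    constructor
    · intro h; nlinarith
    · intro h; nlinarith
  rw [hset]
  -- complement
  have hCm : MeasurableSet {ω | c + t * S ω ≤ X ω} :=
    measurableSet_le (measurable_const.add (hSm.const_mul t)) hXm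
  have hcompl : {ω | c + t * S ω ≤ X ω}ᶜ = {ω | X ω < c + t * S ω} := by
    ext ω; simp [not_le]
  rw [← hcompl, prob_compl_eq_one_sub hCm]
  -- joint law
  haveI : IsProbabilityMeasure (μ.map S) := Measure.isProbabilityMeasure_map hSm.aemeasurable
  have hmap : μ.map (fun ω => (X ω, S ω)) = (μ.map X).prod (μ.map S) :=
    (indepFun_iff_map_prod_eq_prod_map_map hXm.aemeasurable hSm.aemeasurable).mp hXY
  have hsetm : MeasurableSet {p : ℝ × ℝ | c + t * p.2 ≤ p.1} :=
    measurableSet_le (measurable_const.add (measurable_snd.const_mul t)) measurable_fst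
  have hC : μ {ω | c + t * S ω ≤ X ω}
      = ∫⁻ x, (μ.map S) {s | c + t * s ≤ x} ∂(μ.map X) := by
    have h1 : {ω | c + t * S ω ≤ X ω}
        = (fun ω => (X ω, S ω)) ⁻¹' {p : ℝ × ℝ | c + t * p.2 ≤ p.1} := rfl
    rw [h1, ← Measure.map_apply (hXm.prodMk hSm) hsetm, hmap, Measure.prod_apply hsetm]
    simp only [Set.preimage_setOf_eq]
  -- CDF of S
  have hFnn : ∀ y : ℝ, 0 ≤ (if 0 ≤ y then 1 - rexp (-(lR * y)) else 0) := by
    intro y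
    split_ifs with h
    · have : rexp (-(lR * y)) ≤ 1 := by
        rw [Real.exp_le_one_iff]; nlinarith
      linarith
    · exact le_refl 0
  have hcdfS : ∀ y : ℝ, (μ.map S) (Iic y)
      = ENNReal.ofReal ((if 0 ≤ y then 1 - rexp (-(lR * y)) else 0) ^ K) := by
    intro y
    rw [Measure.map_apply hSm measurableSet_Iic]
    have hpre : S ⁻¹' Iic y = ⋂ i, Y i ⁻¹' Iic y := by
      ext ω
      simp only [mem_preimage, mem_Iic, mem_iInter, hS_def]
      constructor
      · intro h i
        exact le_trans
          (le_ciSup (f := fun i => Y i ω) (Set.Finite.bddAbove (Set.finite_range _)) i) h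
      · intro h; exact ciSup_le h
    rw [hpre, hYindep.meas_iInter (fun i => ⟨Iic y, measurableSet_Iic, rfl⟩)]
    have h2 : ∀ i : Fin K, μ (Y i ⁻¹' Iic y)
        = ENNReal.ofReal (if 0 ≤ y then 1 - rexp (-(lR * y)) else 0) := by
      intro i
      rw [← Measure.map_apply (hYm i) measurableSet_Iic, hY i, expMeasure_Iic hlR y]
    rw [Finset.prod_congr rfl (fun i _ => h2 i), Finset.prod_const, Finset.card_univ,
      Fintype.card_fin, ← ENNReal.ofReal_pow (hFnn y)]
  -- slice sets
  have hslice : ∀ x : ℝ, {s : ℝ | c + t * s ≤ x} = Iic ((x - c) / t) := by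
    intro x; ext s
    simp only [mem_setOf_eq, mem_Iic]
    rw [le_div_iff₀ ht0]
    constructor <;> intro h <;> nlinarith
  -- the integrand as a real function
  set f : ℝ → ℝ :=
    fun x => (if c ≤ x then 1 - rexp (-(b * (x - c))) else 0) ^ K * exponentialPDFReal lB x
    with hf_def
  have hbase_nn : ∀ x : ℝ, 0 ≤ (if c ≤ x then 1 - rexp (-(b * (x - c))) else 0) := by
    intro x
    split_ifs with h
    · have : rexp (-(b * (x - c))) ≤ 1 := by
        rw [Real.exp_le_one_iff]; nlinarith
      linarith
    · exact le_refl 0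
  have hbase_le : ∀ x : ℝ, (if c ≤ x then 1 - rexp (-(b * (x - c))) else 0) ≤ 1 := by
    intro x
    split_ifs with h
    · have : 0 ≤ rexp (-(b * (x - c))) := (Real.exp_pos _).le
      linarith
    · exact zero_le_one
  have hbasem : Measurable fun x : ℝ => (if c ≤ x then 1 - rexp (-(b * (x - c))) else 0) := by
    refine Measurable.ite (measurableSet_le measurable_const measurable_id) ?_ measurable_const
    fun_prop
  have hfm : Measurable f := by
    apply (hbasem.pow_const K).mul (measurable_exponentialPDFReal lB)
  have hf_nn : ∀ x, 0 ≤ f x := fun x =>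
    mul_nonneg (pow_nonneg (hbase_nn x) K) (exponentialPDFReal_nonneg hlB x)
  have hfint : Integrable f := by
    refine Integrable.mono (integrable_exponentialPDFReal hlB) hfm.aestronglyMeasurable ?_
    refine Filter.Eventually.of_forall fun x => ?_
    rw [Real.norm_eq_abs, Real.norm_eq_abs, abs_of_nonneg (hf_nn x),
      abs_of_nonneg (exponentialPDFReal_nonneg hlB x), hf_def]
    have h1 : (if c ≤ x then 1 - rexp (-(b * (x - c))) else 0) ^ K ≤ 1 :=
      pow_le_one₀ (hbase_nn x) (hbase_le x)
    exact mul_le_of_le_one_left (exponentialPDFReal_nonneg hlB x) h1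
  -- value of the complement probability
  have hCval : μ {ω | c + t * S ω ≤ X ω} = ENNReal.ofReal (∫ x, f x) := by
    rw [hC]
    have h1 : ∀ x : ℝ, (μ.map S) {s | c + t * s ≤ x}
        = ENNReal.ofReal ((if c ≤ x then 1 - rexp (-(b * (x - c))) else 0) ^ K) := by
      intro x
      have hiff : 0 ≤ (x - c) / t ↔ c ≤ x := by
        rw [le_div_iff₀ ht0]
        constructor <;> intro h <;> nlinarith
      have harg : lR * ((x - c) / t) = b * (x - c) := by
        rw [hb_def]; field_simp; try ring
      have hcond : (if 0 ≤ (x - c) / t then 1 - rexp (-(lR * ((x - c) / t))) else 0)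
          = (if c ≤ x then 1 - rexp (-(b * (x - c))) else 0) := by
        by_cases hcx : c ≤ x
        · simp only [if_pos (hiff.mpr hcx), if_pos hcx, harg]
        · simp only [if_neg (fun hh => hcx (hiff.mp hh)), if_neg hcx]
      rw [hslice x, hcdfS, hcond]
    rw [lintegral_congr h1, hX]
    have hpdf_eq : ∀ x : ℝ,
        ENNReal.ofReal ((if c ≤ x then 1 - rexp (-(b * (x - c))) else 0) ^ K)
            * exponentialPDF lB x = ENNReal.ofReal (f x) := by
      intro x
      rw [exponentialPDF, ← ENNReal.ofReal_mul (pow_nonneg (hbase_nn x) K)]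
    have hgm : Measurable (gammaPDF 1 lB) := (measurable_gammaPDFReal 1 lB).ennreal_ofReal
    rw [expMeasure, gammaMeasure,
      lintegral_withDensity_eq_lintegral_mul _ hgm
        ((hbasem.pow_const K).ennreal_ofReal)]
    have h2 : ((gammaPDF 1 lB) * fun x =>
        (ENNReal.ofReal ((if c ≤ x then 1 - rexp (-(b * (x - c))) else 0) ^ K)))
        = fun x => ENNReal.ofReal (f x) := by
      funext x
      rw [Pi.mul_apply, mul_comm]
      exact hpdf_eq x
    rw [h2, ← ofReal_integral_eq_lintegral_ofReal hfint
      (Filter.Eventually.of_forall hf_nn)]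
  rw [hCval]
  obtain ⟨m, rfl⟩ : ∃ m, K = m + 1 := ⟨K - 1, (Nat.succ_pred_eq_of_pos hK).symm⟩
  have hterm : ∀ j : ℕ, lB / ((j : ℝ) * b + lB)
      = (t * γAR) / ((t * γAR) + (j : ℝ) * γAB) := by
    intro j
    have h1 : (j : ℝ) * b + lB ≠ 0 := by positivity
    have h2 : (t * γAR) + (j : ℝ) * γAB ≠ 0 := by positivity
    rw [hlB_def, hb_def, hlR_def] at h1 ⊢
    field_simp
    ring
  have hexpc : rexp (-(lB * c)) = rexp (-(t - 1) / (ρ * γAB)) := by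
    congr 1
    rw [hlB_def, hc_def]
    field_simp
  have hJ : ∫ x, f x = ((m + 1 : ℕ) : ℝ) * ∑ n ∈ Finset.range (m + 1),
      ((m.choose n : ℝ)) * (-1) ^ n * (γAB / (t * γAR + γAB * ((n : ℝ) + 1)))
        * rexp (-(t - 1) / (ρ * γAB)) := by
    rw [key_integral hlB hb hc _ hK]
    rw [Finset.sum_congr rfl (fun j _ => by rw [hterm j])]
    rw [alt_choose_sum (t * γAR) γAB (by positivity) hAB m]
    rw [hexpc]
    have hs1 : ∑ n ∈ Finset.range (m + 1),
        ((m.choose n : ℝ)) * (-1) ^ n * (γAB / (t * γAR + γAB * ((n : ℝ) + 1)))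
          * rexp (-(t - 1) / (ρ * γAB))
        = (∑ n ∈ Finset.range (m + 1),
            ((m.choose n : ℝ)) * (-1) ^ n * (γAB / (t * γAR + ((n : ℝ) + 1) * γAB)))
          * rexp (-(t - 1) / (ρ * γAB)) := by
      rw [Finset.sum_mul]
      refine Finset.sum_congr rfl fun n _ => ?_
      ring_nf
    rw [hs1]
    push_cast
    ring
  have hJnn : 0 ≤ ∫ x, f x := integral_nonneg hf_nn
  have hsub : (m + 1) - 1 = m := by omega
  simp only [hsub]
  rw [← hJ, ENNReal.ofReal_sub 1 hJnn, ENNReal.ofReal_one]
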